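/- Let Da, λ₁, λ₂, φ_f, φ_s, a₁, a₂ be positive real constants, let α > 0 satisfy Da·(2 + λ₁ + φ_f²/a₁)·α² = 1, let v(x) = cosh(α(1−x))/cosh(α), and let P(x) = (a₂ − φ_f·v'(x))/a₁. Define c_s := −(φ_f·φ_s·α²/a₁ + 1/Da) / ((2 + λ₂)·α²), D := −c_s·v(0), C := c_s·(v(0) − v(1)), and u(x) := c_s·v(x) + C·x + D. Then for all x ∈ [0,1] the solid displacement u satisfies the reduced one-dimensional solid momentum equation without thermal coupling (Ξ = 0): −(2 + λ₂)·u''(x) + φ_s·P'(x) − v(x)/Da = 0, together with the clamped boundary conditions u(0) = 0 and u(1) = 0. -/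

import Mathlib

/-- Exact solution for the solid displacement in the reduced 1D model without
thermal coupling (`Ξ = 0`): `u = c_s·v + C·x + D` solves the solid momentum
balance `−(2+λ₂)u'' + φ_s·P' − v/Da = 0` with clamped ends `u(0)=u(1)=0`. -/
theorem stmt_9
    (Da lam1 lam2 phif phis a1 a2 : ℝ)
    (hDa : 0 < Da) (hlam1 : 0 < lam1) (hlam2 : 0 < lam2)
    (hphif : 0 < phif) (hphis : 0 < phis) (ha1 : 0 < a1) (ha2 : 0 < a2)
    (α : ℝ) (hα : 0 < α)
    (hαeq : Da * (2 + lam1 + phif ^ 2 / a1) * α ^ 2 = 1) :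
    let v : ℝ → ℝ := fun x => Real.cosh (α * (1 - x)) / Real.cosh α
    let P : ℝ → ℝ := fun x => (a2 - phif * deriv v x) / a1
    let cs : ℝ := -(phif * phis * α ^ 2 / a1 + 1 / Da) / ((2 + lam2) * α ^ 2)
    let D : ℝ := -cs * v 0
    let C : ℝ := cs * (v 0 - v 1)
    let u : ℝ → ℝ := fun x => cs * v x + C * x + D
    (∀ x ∈ Set.Icc (0 : ℝ) 1,
      -(2 + lam2) * deriv (deriv u) x + phis * deriv P x - v x / Da = 0) ∧
    u 0 = 0 ∧ u 1 = 0 := by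
  intro v P cs D C u
  have hch : Real.cosh α ≠ 0 := (Real.cosh_pos α).ne'
  -- inner function derivative
  have hin : ∀ x : ℝ, HasDerivAt (fun y : ℝ => α * (1 - y)) (-α) x := by
    intro x
    have h1 : HasDerivAt (fun y : ℝ => 1 - y) (-1 : ℝ) x := by
      simpa using (hasDerivAt_id x).const_sub 1
    simpa using h1.const_mul α
  have hv : ∀ x : ℝ, HasDerivAt v (Real.sinh (α * (1 - x)) * (-α) / Real.cosh α) x := by
    intro x
    exact (((Real.hasDerivAt_cosh (α * (1 - x))).comp x (hin x)).div_const _)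
  have hvd : deriv v = fun x => Real.sinh (α * (1 - x)) * (-α) / Real.cosh α :=
    funext fun x => (hv x).deriv
  have hv2 : ∀ x : ℝ, HasDerivAt (deriv v) (α ^ 2 * v x) x := by
    intro x
    rw [hvd]
    have h1 : HasDerivAt (fun y : ℝ => Real.sinh (α * (1 - y)))
        (Real.cosh (α * (1 - x)) * (-α)) x :=
      ((Real.hasDerivAt_sinh (α * (1 - x))).comp x (hin x) :)
    have := (h1.mul_const (-α)).div_const (Real.cosh α)
    refine this.congr_deriv ?_
    show Real.cosh (α * (1 - x)) * -α * -α / Real.cosh α = α ^ 2 * (Real.cosh (α * (1 - x)) / Real.cosh α)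
    ring
  have hvd2 : deriv (deriv v) = fun x => α ^ 2 * v x :=
    funext fun x => (hv2 x).deriv
  have hP : ∀ x : ℝ, HasDerivAt P (-(phif * (α ^ 2 * v x)) / a1) x := by
    intro x
    have := (((hasDerivAt_const x a2).sub ((hv2 x).const_mul phif)).div_const a1)
    simpa [P, zero_sub] using this
  have hPd : ∀ x : ℝ, deriv P x = -(phif * (α ^ 2 * v x)) / a1 :=
    fun x => (hP x).deriv
  have hu : ∀ x : ℝ, HasDerivAt u
      (cs * (Real.sinh (α * (1 - x)) * (-α) / Real.cosh α) + C) x := by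
    intro x
    have := (((hv x).const_mul cs).add ((hasDerivAt_id x).const_mul C)).add_const D
    simpa [u, mul_comm] using this
  have hud : deriv u = fun x => cs * (Real.sinh (α * (1 - x)) * (-α) / Real.cosh α) + C :=
    funext fun x => (hu x).deriv
  have hu2 : ∀ x : ℝ, deriv (deriv u) x = cs * (α ^ 2 * v x) := by
    intro x
    rw [hud]
    have h1 : HasDerivAt (fun y : ℝ => Real.sinh (α * (1 - y)))
        (Real.cosh (α * (1 - x)) * (-α)) x :=
      ((Real.hasDerivAt_sinh (α * (1 - x))).comp x (hin x) :)
    have h2 := ((((h1.mul_const (-α)).div_const (Real.cosh α)).const_mul cs).add_const C)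
    have h3 : cs * (Real.cosh (α * (1 - x)) * (-α) * (-α) / Real.cosh α)
        = cs * (α ^ 2 * v x) := by
      simp only [v]; ring
    rw [← h3]
    exact h2.deriv
  have hα2 : α ^ 2 ≠ 0 := pow_ne_zero 2 hα.ne'
  have hlam2' : (2 + lam2) ≠ 0 := by positivity
  have key : -(2 + lam2) * cs * α ^ 2 = phif * phis * α ^ 2 / a1 + 1 / Da := by
    simp only [cs]
    field_simp
  refine ⟨?_, ?_, ?_⟩
  · intro x _
    rw [hu2 x, hPd x]
    linear_combination v x * key
  · simp only [u, D, C]; ring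
  · simp only [u, D, C]; ring
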